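/- Fix ρ₀ > 0 and φ ∈ (0, π/2), set t̄ := ρ₀²/(2 cos φ), and define for t ∈ [0, t̄) the family γ(t,u) := (ρ(t) cos u, ρ(t) sin u, z(t)) with ρ(t) := (ρ₀² − 2t cos φ)^{1/2} and z(t) := (ρ₀ − ρ(t)) tan φ. Then γ solves the framed curvature flow with constant angle θ ≡ φ on [0,t̄), ρ(t) → 0 as t → t̄, and γ(t,u) converges uniformly to the single point (0, 0, ρ₀ tan φ) as t → t̄; i.e. the flow develops a cone singularity at a point shifted from the center of the initial circle in the binormal direction by the distance ρ₀ tan φ. -/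

import Mathlib

noncomputable section

open Real MeasureTheory
open scoped RealInnerProductSpace

/-- Euclidean 3-space. -/
abbrev E3 : Type := EuclideanSpace ℝ (Fin 3)

/-- The cross product in `ℝ³`. -/
def cross (a b : E3) : E3 :=
  WithLp.toLp 2 ![a 1 * b 2 - a 2 * b 1, a 2 * b 0 - a 0 * b 2, a 0 * b 1 - a 1 * b 0]

/-- Partial derivative in the first (time) variable, vector valued. -/
def pt (f : ℝ → ℝ → E3) (t u : ℝ) : E3 := deriv (fun t' => f t' u) t

/-- Partial derivative in the second (space) variable, vector valued. -/
def pu (f : ℝ → ℝ → E3) (t u : ℝ) : E3 := deriv (fun u' => f t u') u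

/-- Partial derivative in the first (time) variable, scalar valued. -/
def ptR (f : ℝ → ℝ → ℝ) (t u : ℝ) : ℝ := deriv (fun t' => f t' u) t

/-- Partial derivative in the second (space) variable, scalar valued. -/
def puR (f : ℝ → ℝ → ℝ) (t u : ℝ) : ℝ := deriv (fun u' => f t u') u

/-- The local rate of parametrization `g := ‖∂ᵤ γ‖`. -/
def pg (γ : ℝ → ℝ → E3) (t u : ℝ) : ℝ := ‖pu γ t u‖

/-- Arclength derivative `∂ₛ := g⁻¹ ∂ᵤ` of a vector field along `γ`. -/
def ds (γ f : ℝ → ℝ → E3) (t u : ℝ) : E3 := (pg γ t u)⁻¹ • pu f t u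

/-- Arclength derivative `∂ₛ := g⁻¹ ∂ᵤ` of a scalar field along `γ`. -/
def dsR (γ : ℝ → ℝ → E3) (f : ℝ → ℝ → ℝ) (t u : ℝ) : ℝ := (pg γ t u)⁻¹ * puR f t u

/-- The unit tangent `T := ∂ₛ γ`. -/
def tang (γ : ℝ → ℝ → E3) : ℝ → ℝ → E3 := ds γ γ

/-- The curvature `κ := ‖∂ₛ² γ‖`. -/
def curv (γ : ℝ → ℝ → E3) (t u : ℝ) : ℝ := ‖ds γ (tang γ) t u‖

/-- The Frenet normal `N := κ⁻¹ ∂ₛ² γ`. -/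
def fN (γ : ℝ → ℝ → E3) (t u : ℝ) : E3 := (curv γ t u)⁻¹ • ds γ (tang γ) t u

/-- The Frenet binormal `B := T × N`. -/
def fB (γ : ℝ → ℝ → E3) (t u : ℝ) : E3 := cross (tang γ t u) (fN γ t u)

/-- The torsion `τ := ⟨∂ₛ N, B⟩`. -/
def tors (γ : ℝ → ℝ → E3) (t u : ℝ) : ℝ := ⟪ds γ (fN γ) t u, fB γ t u⟫

/-- The velocity `cos θ ∂ₛ²γ + sin θ (∂ₛγ × ∂ₛ²γ)` of the framed curvature flow. -/
def fcfVel (γ : ℝ → ℝ → E3) (θ : ℝ → ℝ → ℝ) (t u : ℝ) : E3 :=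
  Real.cos (θ t u) • ds γ (tang γ) t u +
    Real.sin (θ t u) • cross (tang γ t u) (ds γ (tang γ) t u)

/-- The length `L(Γ_t) := ∫₀^{2π} g du`. -/
def len (γ : ℝ → ℝ → E3) (t : ℝ) : ℝ := ∫ u in (0:ℝ)..(2 * π), pg γ t u

lemma hasDerivAt_E3 {f : ℝ → E3} {f₀ f₁ f₂ : ℝ → ℝ} {v₀ v₁ v₂ x : ℝ}
    (hf : ∀ y, f y = ![f₀ y, f₁ y, f₂ y])
    (h₀ : HasDerivAt f₀ v₀ x) (h₁ : HasDerivAt f₁ v₁ x) (h₂ : HasDerivAt f₂ v₂ x) :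
    HasDerivAt f (WithLp.toLp 2 ![v₀, v₁, v₂] : E3) x := by
  have hg : HasDerivAt (fun y => (![f₀ y, f₁ y, f₂ y] : Fin 3 → ℝ)) ![v₀, v₁, v₂] x := by
    apply hasDerivAt_pi.mpr
    intro i
    fin_cases i
    · simpa using h₀
    · simpa using h₁
    · simpa using h₂
  have h := HasFDerivAt.comp_hasDerivAt x
    (PiLp.hasFDerivAt_toLp 2 (𝕜 := ℝ) (E := fun _ : Fin 3 => ℝ) _) hg
  have hfe : f = (WithLp.toLp 2 ∘ fun y => (![f₀ y, f₁ y, f₂ y] : Fin 3 → ℝ)) :=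
    funext fun y => by rw [Function.comp_apply, ← hf y]
  rw [hfe]
  exact h

/-- Cone singularity: the shrinking circle
`γ(t,u) = (ρ(t) cos u, ρ(t) sin u, z(t))` with `ρ(t) = (ρ₀² − 2t cos φ)^{1/2}`,
`z(t) = (ρ₀ − ρ(t)) tan φ` solves the framed curvature flow with constant angle
`θ ≡ φ` on `[0, t̄)`, `t̄ = ρ₀²/(2 cos φ)`, the radius tends to `0`, and the curve
converges uniformly to the single point `(0, 0, ρ₀ tan φ)` as `t → t̄`. -/
theorem framed_curvature_flow_cone_singularity
    (ρ₀ φ : ℝ) (hρ₀ : 0 < ρ₀) (hφ : φ ∈ Set.Ioo (0:ℝ) (π / 2))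
    (tend : ℝ) (htend : tend = ρ₀ ^ 2 / (2 * Real.cos φ))
    (ρ z : ℝ → ℝ)
    (hρ : ∀ t, ρ t = Real.sqrt (ρ₀ ^ 2 - 2 * t * Real.cos φ))
    (hz : ∀ t, z t = (ρ₀ - ρ t) * Real.tan φ)
    (γ : ℝ → ℝ → E3)
    (hγ : ∀ t u, γ t u = ![ρ t * Real.cos u, ρ t * Real.sin u, z t]) :
    (∀ t ∈ Set.Ico (0:ℝ) tend, ∀ u,
        pt γ t u = fcfVel γ (fun _ _ => φ) t u) ∧
    Filter.Tendsto ρ (nhdsWithin tend (Set.Iio tend)) (nhds 0) ∧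
    TendstoUniformly γ (fun _ => (WithLp.toLp 2 ![0, 0, ρ₀ * Real.tan φ] : E3))
      (nhdsWithin tend (Set.Iio tend)) := by
  obtain ⟨hφ0, hφ2⟩ := hφ
  have hcos : 0 < Real.cos φ := Real.cos_pos_of_mem_Ioo ⟨by linarith [Real.pi_pos], hφ2⟩
  have hρnn : ∀ t, 0 ≤ ρ t := fun t => (hρ t) ▸ Real.sqrt_nonneg _
  -- continuity and limit of ρ
  have hρcont : Continuous ρ := by
    have : ρ = fun t => Real.sqrt (ρ₀ ^ 2 - 2 * t * Real.cos φ) := funext hρ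
    rw [this]
    fun_prop
  have hρtend : ρ tend = 0 := by
    rw [hρ, htend]
    have : ρ₀ ^ 2 - 2 * (ρ₀ ^ 2 / (2 * Real.cos φ)) * Real.cos φ = 0 := by
      field_simp
      ring
    rw [this, Real.sqrt_zero]
  have part2 : Filter.Tendsto ρ (nhdsWithin tend (Set.Iio tend)) (nhds 0) :=
    (hρtend ▸ (hρcont.tendsto tend)).mono_left nhdsWithin_le_nhds
  refine ⟨?_, part2, ?_⟩
  · -- the flow equation
    intro t ht u
    have hpos : 0 < ρ₀ ^ 2 - 2 * t * Real.cos φ := by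
      have h1 : t < ρ₀ ^ 2 / (2 * Real.cos φ) := htend ▸ ht.2
      have h2 : t * (2 * Real.cos φ) < ρ₀ ^ 2 := (lt_div_iff₀ (by positivity)).mp h1
      nlinarith
    have hρpos : 0 < ρ t := (hρ t) ▸ Real.sqrt_pos.mpr hpos
    have hρne : ρ t ≠ 0 := ne_of_gt hρpos
    have hρsq : ρ t ^ 2 = ρ₀ ^ 2 - 2 * t * Real.cos φ := by
      rw [hρ]; exact Real.sq_sqrt hpos.le
    -- spatial derivative
    have hpu : ∀ u', pu γ t u' = WithLp.toLp 2 ![ρ t * -Real.sin u', ρ t * Real.cos u', 0] := by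
      intro u'
      have h := hasDerivAt_E3 (f := fun u'' => γ t u'') (fun y => hγ t y)
        ((Real.hasDerivAt_cos u').const_mul (ρ t))
        ((Real.hasDerivAt_sin u').const_mul (ρ t))
        (hasDerivAt_const u' (z t))
      simpa [pu] using h.deriv
    have hpg : ∀ u', pg γ t u' = ρ t := by
      intro u'
      have h : (∑ i, ‖(WithLp.toLp 2 ![ρ t * -Real.sin u', ρ t * Real.cos u', 0] : E3) i‖ ^ 2) = ρ t ^ 2 := by
        simp [Fin.sum_univ_three, Real.norm_eq_abs, sq_abs]
        have := Real.sin_sq_add_cos_sq u'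
        nlinarith
      rw [pg, hpu, EuclideanSpace.norm_eq]
      simp only [Real.norm_eq_abs] at h ⊢
      rw [h, Real.sqrt_sq hρpos.le]
    have htang : ∀ u', tang γ t u' = WithLp.toLp 2 ![-Real.sin u', Real.cos u', 0] := by
      intro u'
      rw [tang, ds, hpg, hpu]
      ext i
      fin_cases i <;> simp <;> field_simp <;> ring
    have hputang : pu (tang γ) t u = WithLp.toLp 2 ![-Real.cos u, -Real.sin u, 0] := by
      have h := hasDerivAt_E3 (f := fun u' => tang γ t u') (fun y => congrArg WithLp.ofLp (htang y))
        (Real.hasDerivAt_sin u).neg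
        (Real.hasDerivAt_cos u)
        (hasDerivAt_const u (0:ℝ))
      simpa [pu, Real.hasDerivAt_cos] using h.deriv
    have hA : ds γ (tang γ) t u = WithLp.toLp 2 ![-Real.cos u / ρ t, -Real.sin u / ρ t, 0] := by
      rw [ds, hpg, hputang]
      ext i
      fin_cases i <;> simp <;> field_simp
    have hcross : cross (tang γ t u) (ds γ (tang γ) t u) = WithLp.toLp 2 ![0, 0, (ρ t)⁻¹] := by
      rw [hA, htang, cross]
      ext i
      fin_cases i <;> simp
      have := Real.sin_sq_add_cos_sq u
      field_simp
      nlinarith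
    -- time derivatives
    have hρ' : HasDerivAt ρ (-Real.cos φ / ρ t) t := by
      have h1 : HasDerivAt (fun t' => ρ₀ ^ 2 - 2 * t' * Real.cos φ) (-(2 * Real.cos φ)) t := by
        have := ((hasDerivAt_id t).const_mul 2).mul_const (Real.cos φ)
        have h2 := (hasDerivAt_const t (ρ₀ ^ 2)).sub this
        exact h2.congr_deriv (by ring)
      have h2 := (Real.hasDerivAt_sqrt (ne_of_gt hpos)).comp t h1
      have h3 : HasDerivAt ρ
          (1 / (2 * Real.sqrt (ρ₀ ^ 2 - 2 * t * Real.cos φ)) * -(2 * Real.cos φ)) t := by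
        have hfe : ((fun x => Real.sqrt x) ∘ fun t' => ρ₀ ^ 2 - 2 * t' * Real.cos φ) = ρ := by
          funext y
          simp [Function.comp, hρ]
        rw [hfe] at h2
        exact h2
      convert h3 using 1
      rw [← hρ t]
      field_simp
    have hz' : HasDerivAt z (Real.sin φ / ρ t) t := by
      have hfe : z = fun t' => (ρ₀ - ρ t') * Real.tan φ := funext hz
      have h := ((hasDerivAt_const t ρ₀).sub hρ').mul_const (Real.tan φ)
      rw [hfe]
      refine h.congr_deriv ?_
      rw [Real.tan_eq_sin_div_cos]
      field_simp
      ring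
    have hpt : pt γ t u =
        WithLp.toLp 2 ![(-Real.cos φ / ρ t) * Real.cos u, (-Real.cos φ / ρ t) * Real.sin u,
          Real.sin φ / ρ t] := by
      have h := hasDerivAt_E3 (f := fun t' => γ t' u) (fun t' => hγ t' u)
        (hρ'.mul_const (Real.cos u))
        (hρ'.mul_const (Real.sin u))
        hz'
      simpa [pt] using h.deriv
    rw [hpt, fcfVel, hcross, hA]
    ext i
    fin_cases i <;> simp <;> ring
  · -- uniform convergence
    rw [Metric.tendstoUniformly_iff]
    intro ε hε
    set C := Real.sqrt (1 + Real.tan φ ^ 2) with hC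
    have hdist : ∀ (p : E3), p = WithLp.toLp 2 ![0, 0, ρ₀ * Real.tan φ] → ∀ t u,
        dist p (γ t u) = ρ t * C := by
      intro p hp t u
      rw [EuclideanSpace.dist_eq, hγ, hz, hp, hC,
        show ρ t * Real.sqrt (1 + Real.tan φ ^ 2)
            = Real.sqrt (ρ t ^ 2 * (1 + Real.tan φ ^ 2)) by
          rw [Real.sqrt_mul (sq_nonneg _), Real.sqrt_sq (hρnn t)]]
      congr 1
      simp [Fin.sum_univ_three, Real.dist_eq, sq_abs]
      have := Real.sin_sq_add_cos_sq u
      nlinarith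
    have htC : Filter.Tendsto (fun t => ρ t * C) (nhdsWithin tend (Set.Iio tend)) (nhds 0) := by
      simpa using part2.mul_const C
    filter_upwards [htC.eventually (gt_mem_nhds hε)] with t ht u
    rw [hdist _ rfl t u]
    exact ht
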